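/- If f belongs to the class 𝓕 and z ∈ 𝔻 with |z| < 1/3, then Re(1 + 2a_2 z + 3a_3 z²) > 0, where a_2, a_3 are the second and third Taylor coefficients of f at 0; that is, the third section s_3(f) satisfies Re((s_3(f))'(z)) > 0 on |z| < 1/3. -/

import Mathlib

open Complex Metric Set

/-- The class 𝓕 of normalized locally univalent analytic functions on the unit disk
satisfying `Re (1 + z f''(z)/f'(z)) > -1/2`. -/
def IsInClassF (f : ℂ → ℂ) : Prop :=
  AnalyticOnNhd ℂ f (ball (0 : ℂ) 1) ∧ f 0 = 0 ∧ deriv f 0 = 1 ∧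
    (∀ z ∈ ball (0 : ℂ) 1, deriv f z ≠ 0) ∧
    (∀ z ∈ ball (0 : ℂ) 1, (1 + z * deriv (deriv f) z / deriv f z).re > -(1/2))

/-- The `n`-th section (partial sum) `s_n(f)(z) = z + ∑_{k=2}^n a_k z^k`, where
`a_k = f^{(k)}(0)/k!`. -/
noncomputable def sectionF (f : ℂ → ℂ) (n : ℕ) (z : ℂ) : ℂ :=
  ∑ k ∈ Finset.Icc 1 n, (iteratedDeriv k f 0 / (Nat.factorial k)) * z ^ k

lemma key_ineq (α β z : ℂ) (hα : ‖α‖ ≤ 1) (hβ : ‖β‖ ≤ 1 - ‖α‖^2) (hz : ‖z‖ < 1/3) :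
    0 < (1 + 3*α*z + 6*α^2*z^2 + (3/2)*β*z^2).re := by
  have hre : (1 + 3*α*z + 6*α^2*z^2 + (3/2)*β*z^2).re
      = 1 + 3*(α*z).re + 6*((α*z).re^2 - (α*z).im^2) + (3/2)*(β*z^2).re := by
    have : α^2*z^2 = (α*z)^2 := by ring
    simp [this, Complex.add_re, Complex.mul_re, Complex.mul_im, Complex.sq_norm, pow_two]
    ring
  have hab : (α*z).re^2 + (α*z).im^2 = ‖α‖^2 * ‖z‖^2 := by
    have h1 : (α*z).re^2+(α*z).im^2 = ‖α*z‖^2 := by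
      rw [Complex.sq_norm, Complex.normSq_apply]; ring
    rw [h1, norm_mul, mul_pow]
  have hβz : -((1-‖α‖^2) * ‖z‖^2) ≤ (β*z^2).re := by
    have h1 : |(β*z^2).re| ≤ ‖β*z^2‖ := Complex.abs_re_le_norm _
    have h2 : ‖β*z^2‖ ≤ (1-‖α‖^2) * ‖z‖^2 := by
      rw [norm_mul, norm_pow]
      exact mul_le_mul_of_nonneg_right hβ (by positivity)
    nlinarith [abs_nonneg (β*z^2).re, neg_abs_le (β*z^2).re]
  have hz0 : (0:ℝ) ≤ ‖z‖ := norm_nonneg z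
  have hα0 : (0:ℝ) ≤ ‖α‖ := norm_nonneg α
  have hA2 : ‖α‖^2 * ‖z‖^2 ≤ ‖z‖^2 := by nlinarith [sq_nonneg ‖z‖, mul_le_mul_of_nonneg_right (mul_le_one₀ hα hα0 hα) (sq_nonneg ‖z‖)]
  have hb2 : (α*z).im^2 ≤ ‖z‖^2 - (α*z).re^2 := by nlinarith
  have hr2 : ‖z‖^2 < 1/9 := by nlinarith
  have hβz' : -(‖z‖^2 - (α*z).re^2 - (α*z).im^2) ≤ (β*z^2).re := by nlinarith
  rw [hre]
  nlinarith [sq_nonneg ((α*z).re + 1/8), hb2, hr2, hβz']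

lemma mobius_lt {a w : ℂ} (ha : ‖a‖ < 1) (hw : ‖w‖ < 1) :
    ‖w - a‖ < ‖1 - (starRingEnd ℂ) a * w‖ := by
  have key : Complex.normSq (1 - (starRingEnd ℂ) a * w) - Complex.normSq (w - a)
      = (1 - Complex.normSq a) * (1 - Complex.normSq w) := by
    simp [Complex.normSq_apply, Complex.mul_re, Complex.mul_im, Complex.sub_re,
      Complex.sub_im, Complex.one_re, Complex.one_im, Complex.conj_re, Complex.conj_im]
    ring
  have ha' : Complex.normSq a < 1 := by
    rw [← Complex.sq_norm]; nlinarith [norm_nonneg a, ha]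
  have hw' : Complex.normSq w < 1 := by
    rw [← Complex.sq_norm]; nlinarith [norm_nonneg w, hw]
  have h2 : Complex.normSq (w - a) < Complex.normSq (1 - (starRingEnd ℂ) a * w) := by
    nlinarith
  have := Real.sqrt_lt_sqrt (Complex.normSq_nonneg _) h2
  simpa [Complex.norm_def] using this

lemma schwarz_pick_center {φ : ℂ → ℂ} (hd : DifferentiableOn ℂ φ (ball 0 1))
    (hb : ∀ z ∈ ball (0:ℂ) 1, ‖φ z‖ ≤ 1) : ‖deriv φ 0‖ ≤ 1 - ‖φ 0‖^2 := by
  by_cases hstrict : ∀ z ∈ ball (0:ℂ) 1, ‖φ z‖ < 1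
  · -- Möbius transform
    set a := φ 0 with ha_def
    have ha : ‖a‖ < 1 := hstrict 0 (mem_ball_self one_pos)
    set ψ : ℂ → ℂ := fun z => (φ z - a) / (1 - (starRingEnd ℂ) a * φ z) with hψ
    have hden : ∀ z ∈ ball (0:ℂ) 1, (1 - (starRingEnd ℂ) a * φ z) ≠ 0 := by
      intro z hz
      have : ‖(starRingEnd ℂ) a * φ z‖ < 1 := by
        rw [norm_mul]
        calc ‖(starRingEnd ℂ) a‖ * ‖φ z‖ ≤ ‖(starRingEnd ℂ) a‖ * 1 :=
              mul_le_mul_of_nonneg_left (hb z hz) (norm_nonneg _)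
        _ < 1 := by simpa using ha
      intro h
      rw [sub_eq_zero] at h
      rw [← h] at this
      simp at this
    have hdψ : DifferentiableOn ℂ ψ (ball 0 1) := by
      apply DifferentiableOn.div (hd.sub_const a)
      · exact (differentiableOn_const _).sub ((differentiableOn_const _).mul hd)
      · exact hden
    have hmaps : MapsTo ψ (ball (0:ℂ) 1) (ball (ψ 0) 1) := by
      have hψ0 : ψ 0 = 0 := by simp [hψ, ha_def]
      rw [hψ0]
      intro z hz
      rw [mem_ball, dist_zero_right, hψ]
      rw [norm_div, div_lt_one (norm_pos_iff.mpr (hden z hz))]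
      exact mobius_lt ha (hstrict z hz)
    have hψd := Complex.norm_deriv_le_div_of_mapsTo_ball hdψ (hmaps.mono_right ball_subset_closedBall) one_pos
    rw [div_one] at hψd
    have hφ0 : DifferentiableAt ℂ φ 0 :=
      hd.differentiableAt (isOpen_ball.mem_nhds (mem_ball_self one_pos))
    have hv0 : (1 - (starRingEnd ℂ) a * a) ≠ 0 := by
      simpa [ha_def] using hden 0 (mem_ball_self one_pos)
    have hderiv : deriv ψ 0 = deriv φ 0 / (1 - (starRingEnd ℂ) a * a) := by
      rw [hψ]
      rw [deriv_fun_div (c := fun z => φ z - a) (d := fun z => 1 - (starRingEnd ℂ) a * φ z) (hφ0.sub_const a)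
        ((differentiableAt_const _).sub ((differentiableAt_const _).mul hφ0))
        (by simpa [ha_def] using hv0)]
      rw [deriv_sub_const, deriv_const_sub, deriv_const_mul _ hφ0]
      rw [← ha_def]; field_simp
      ring
    have hnorm1 : (1 : ℂ) - (starRingEnd ℂ) a * a = ((1 - ‖a‖^2 : ℝ) : ℂ) := by
      rw [mul_comm, Complex.mul_conj]
      rw [Complex.normSq_eq_norm_sq]
      push_cast
      ring
    have hpos : (0:ℝ) < 1 - ‖a‖^2 := by nlinarith [norm_nonneg a, ha]
    have : ‖deriv ψ 0‖ = ‖deriv φ 0‖ / (1 - ‖a‖^2) := by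
      rw [hderiv, norm_div, hnorm1, Complex.norm_real, Real.norm_of_nonneg hpos.le]
    rw [this] at hψd
    calc ‖deriv φ 0‖ = ‖deriv φ 0‖ / (1 - ‖a‖^2) * (1 - ‖a‖^2) :=
          (div_mul_cancel₀ _ hpos.ne').symm
    _ ≤ 1 * (1 - ‖a‖^2) := mul_le_mul_of_nonneg_right hψd hpos.le
    _ = 1 - ‖a‖^2 := one_mul _
  · -- constant case
    push_neg at hstrict
    obtain ⟨z₀, hz₀, hz₀'⟩ := hstrict
    have heq : ‖φ z₀‖ = 1 := le_antisymm (hb z₀ hz₀) hz₀'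
    have hmax : IsMaxOn (norm ∘ φ) (ball 0 1) z₀ := by
      intro z hz; simp only [Function.comp_apply, heq]; exact hb z hz
    have hconst := Complex.eqOn_of_isPreconnected_of_isMaxOn_norm
      (convex_ball (0:ℂ) 1).isPreconnected isOpen_ball hd hz₀ hmax
    have h0 : φ 0 = φ z₀ := hconst (mem_ball_self one_pos)
    have hder : deriv φ 0 = 0 := by
      have : φ =ᶠ[nhds (0:ℂ)] fun _ => φ z₀ :=
        Filter.eventuallyEq_of_mem (isOpen_ball.mem_nhds (mem_ball_self one_pos)) hconst
      rw [this.deriv_eq]; simp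
    rw [hder, h0, heq]; norm_num

lemma analyticAt_deriv {f : ℂ → ℂ} {x : ℂ} (h : AnalyticAt ℂ f x) :
    AnalyticAt ℂ (deriv f) x :=
  ((ContinuousLinearMap.apply ℂ ℂ (1 : ℂ)).analyticAt _).comp h.fderiv


lemma schwarz_coeffs {ω : ℂ → ℂ} (hω : AnalyticOnNhd ℂ ω (ball 0 1)) (h0 : ω 0 = 0)
    (hb : ∀ z ∈ ball (0:ℂ) 1, ‖ω z‖ < 1) :
    ‖deriv ω 0‖ ≤ 1 ∧ ‖deriv (deriv ω) 0 / 2‖ ≤ 1 - ‖deriv ω 0‖^2 := by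
  set φ : ℂ → ℂ := dslope ω 0 with hφdef
  have h01 : (0:ℂ) ∈ ball (0:ℂ) 1 := mem_ball_self one_pos
  have hdω : DifferentiableOn ℂ ω (ball 0 1) :=
    fun z hz => (hω z hz).differentiableAt.differentiableWithinAt
  have hdφ : DifferentiableOn ℂ φ (ball 0 1) :=
    (differentiableOn_dslope (isOpen_ball.mem_nhds h01)).mpr hdω
  have hmaps : MapsTo ω (ball (0:ℂ) 1) (ball (ω 0) 1) := by
    rw [h0]
    intro z hz
    rw [mem_ball, dist_zero_right]
    exact hb z hz
  have hφb : ∀ z ∈ ball (0:ℂ) 1, ‖φ z‖ ≤ 1 := fun z hz => by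
    simpa using Complex.norm_dslope_le_div_of_mapsTo_ball hdω (hmaps.mono_right ball_subset_closedBall) hz
  have hφ0 : φ 0 = deriv ω 0 := dslope_same ω 0
  -- analyticity of φ at 0
  obtain ⟨p, hp⟩ := hω 0 h01
  have hφan : AnalyticAt ℂ φ 0 := ⟨p.fslope, hp.has_fpower_series_dslope_fslope⟩
  -- ω z = z * φ z
  have hωz : ∀ z : ℂ, ω z = z * φ z := by
    intro z
    have := sub_smul_dslope ω 0 z
    rw [h0, sub_zero, sub_zero, smul_eq_mul] at this
    exact this.symm
  -- deriv ω = φ + z * φ' on ball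
  have hderiv1 : ∀ z ∈ ball (0:ℂ) 1, deriv ω z = φ z + z * deriv φ z := by
    intro z hz
    have hφz : DifferentiableAt ℂ φ z := hdφ.differentiableAt (isOpen_ball.mem_nhds hz)
    have : HasDerivAt (fun w => w * φ w) (1 * φ z + z * deriv φ z) z :=
      (hasDerivAt_id z).mul hφz.hasDerivAt
    have heq : ω = fun w => w * φ w := funext hωz
    rw [heq]
    rw [this.deriv]
    ring
  -- second derivative
  have hderiv2 : deriv (deriv ω) 0 = 2 * deriv φ 0 := by
    have hev : deriv ω =ᶠ[nhds (0:ℂ)] fun z => φ z + z * deriv φ z :=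
      Filter.eventuallyEq_of_mem (isOpen_ball.mem_nhds h01) hderiv1
    rw [hev.deriv_eq]
    have hφ0d : DifferentiableAt ℂ φ 0 := hφan.differentiableAt
    have hdφ0d : DifferentiableAt ℂ (deriv φ) 0 := (analyticAt_deriv hφan).differentiableAt
    have h2 : HasDerivAt (fun z : ℂ => z * deriv φ z) (1 * deriv φ 0 + 0 * deriv (deriv φ) 0) 0 :=
      (hasDerivAt_id 0).mul hdφ0d.hasDerivAt
    rw [deriv_fun_add hφ0d (h2.differentiableAt), h2.deriv]
    ring
  constructor
  · rw [← hφ0]; exact hφb 0 h01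
  · rw [hderiv2, ← hφ0]
    have := schwarz_pick_center hdφ hφb
    calc ‖2 * deriv φ 0 / 2‖ = ‖deriv φ 0‖ := by norm_num
    _ ≤ 1 - ‖φ 0‖^2 := this


lemma deriv2_div {u v : ℂ → ℂ} {x : ℂ} (hu : AnalyticAt ℂ u x) (hv : AnalyticAt ℂ v x)
    (h0 : v x ≠ 0) :
    deriv (deriv (fun z => u z / v z)) x =
      (deriv (deriv u) x * v x - u x * deriv (deriv v) x) / (v x)^2
        - 2 * deriv v x * (deriv u x * v x - u x * deriv v x) / (v x)^3 := by
  have hev : deriv (fun z => u z / v z)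
      =ᶠ[nhds x] fun z => (deriv u z * v z - u z * deriv v z) / (v z)^2 := by
    filter_upwards [hu.eventually_analyticAt, hv.eventually_analyticAt,
      hv.continuousAt.eventually_ne h0] with z hu' hv' hvz
    exact deriv_div hu'.differentiableAt hv'.differentiableAt hvz
  rw [hev.deriv_eq]
  have hdu : AnalyticAt ℂ (deriv u) x := analyticAt_deriv hu
  have hdv : AnalyticAt ℂ (deriv v) x := analyticAt_deriv hv
  have hN : AnalyticAt ℂ (fun z => deriv u z * v z - u z * deriv v z) x :=
    (hdu.mul hv).sub (hu.mul hdv)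
  have hD : AnalyticAt ℂ (fun z => (v z)^2) x := hv.pow 2
  rw [deriv_fun_div hN.differentiableAt hD.differentiableAt (pow_ne_zero 2 h0)]
  have hNd : deriv (fun z => deriv u z * v z - u z * deriv v z) x
      = (deriv (deriv u) x * v x + deriv u x * deriv v x)
        - (deriv u x * deriv v x + u x * deriv (deriv v) x) := by
    rw [deriv_fun_sub (f := fun z => deriv u z * v z) (g := fun z => u z * deriv v z) (hdu.differentiableAt.mul hv.differentiableAt)
      (hu.differentiableAt.mul hdv.differentiableAt),
      deriv_fun_mul hdu.differentiableAt hv.differentiableAt,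
      deriv_fun_mul hu.differentiableAt hdv.differentiableAt]
  have hDd : deriv (fun z => (v z)^2) x = 2 * v x * deriv v x := by
    have : deriv (fun z => v z ^ 2) x = _ := ((hv.differentiableAt.hasDerivAt).pow 2).deriv
    rw [this]; norm_num
  rw [hNd, hDd]
  field_simp
  ring

lemma deriv2_affine {a b : ℂ → ℂ} (ha : AnalyticOnNhd ℂ a (ball 0 1))
    (hb : AnalyticOnNhd ℂ b (ball 0 1)) (c : ℂ) :
    deriv (fun z => c * a z + z * b z) 0 = c * deriv a 0 + b 0 ∧
    deriv (deriv (fun z => c * a z + z * b z)) 0 = c * deriv (deriv a) 0 + 2 * deriv b 0 := by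
  have h01 : (0:ℂ) ∈ ball (0:ℂ) 1 := mem_ball_self one_pos
  have h1 : ∀ z ∈ ball (0:ℂ) 1,
      deriv (fun w => c * a w + w * b w) z = c * deriv a z + (b z + z * deriv b z) := by
    intro z hz
    have haz : DifferentiableAt ℂ a z := (ha z hz).differentiableAt
    have hbz : DifferentiableAt ℂ b z := (hb z hz).differentiableAt
    have H : HasDerivAt (fun w => c * a w + w * b w)
        (c * deriv a z + (1 * b z + z * deriv b z)) z :=
      (haz.hasDerivAt.const_mul c).add ((hasDerivAt_id z).mul hbz.hasDerivAt)
    rw [H.deriv]; ring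
  constructor
  · rw [h1 0 h01]; ring
  · have hev : deriv (fun w => c * a w + w * b w)
        =ᶠ[nhds (0:ℂ)] fun z => c * deriv a z + (b z + z * deriv b z) :=
      Filter.eventuallyEq_of_mem (isOpen_ball.mem_nhds h01) h1
    rw [hev.deriv_eq]
    have hda : DifferentiableAt ℂ (deriv a) 0 := (analyticAt_deriv (ha 0 h01)).differentiableAt
    have hdb : DifferentiableAt ℂ (deriv b) 0 := (analyticAt_deriv (hb 0 h01)).differentiableAt
    have hb0 : DifferentiableAt ℂ b 0 := (hb 0 h01).differentiableAt
    have H : HasDerivAt (fun z => c * deriv a z + (b z + z * deriv b z))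
        (c * deriv (deriv a) 0 + (deriv b 0 + (1 * deriv b 0 + 0 * deriv (deriv b) 0))) 0 :=
      (hda.hasDerivAt.const_mul c).add
        (hb0.hasDerivAt.add ((hasDerivAt_id 0).mul hdb.hasDerivAt))
    rw [H.deriv]; ring

lemma norm_lt_three_add {t : ℂ} (ht : (1 + t).re > -(1/2)) : ‖t‖ < ‖3 + t‖ := by
  have h1 : t.re > -(3/2) := by
    have : (1 + t).re = 1 + t.re := by simp
    linarith [ht, this ▸ ht]
  have h2 : Complex.normSq t < Complex.normSq (3 + t) := by
    simp only [Complex.normSq_apply, Complex.add_re, Complex.add_im]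
    norm_num
    nlinarith
  have := Real.sqrt_lt_sqrt (Complex.normSq_nonneg _) h2
  simpa [Complex.norm_def] using this

theorem third_section_re_pos (f : ℂ → ℂ) (hf : IsInClassF f) (z : ℂ)
    (hz : ‖z‖ < 1/3) :
    0 < (1 + 2 * (iteratedDeriv 2 f 0 / 2) * z
          + 3 * (iteratedDeriv 3 f 0 / 6) * z ^ 2).re := by
  obtain ⟨hfa, hf0, hf1, hfd, hre⟩ := hf
  have h01 : (0:ℂ) ∈ ball (0:ℂ) 1 := mem_ball_self one_pos
  have hF1 : AnalyticOnNhd ℂ (deriv f) (ball 0 1) := hfa.deriv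
  have hF2 : AnalyticOnNhd ℂ (deriv (deriv f)) (ball 0 1) := hF1.deriv
  -- U and V
  have hUan : AnalyticOnNhd ℂ (fun w : ℂ => w * deriv (deriv f) w) (ball 0 1) :=
    analyticOnNhd_id.mul hF2
  have hVan : AnalyticOnNhd ℂ (fun w : ℂ => 3 * deriv f w + w * deriv (deriv f) w) (ball 0 1) :=
    (analyticOnNhd_const.mul hF1).add (analyticOnNhd_id.mul hF2)
  have hVne : ∀ w ∈ ball (0:ℂ) 1, 3 * deriv f w + w * deriv (deriv f) w ≠ 0 := by
    intro w hw hV0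
    have hd := hfd w hw
    have h3 : w * deriv (deriv f) w = -(3 * deriv f w) := eq_neg_of_add_eq_zero_right hV0
    have hq : w * deriv (deriv f) w / deriv f w = -3 := by rw [h3]; field_simp
    have hthis := hre w hw
    rw [hq] at hthis
    norm_num at hthis
  have hωan : AnalyticOnNhd ℂ
      (fun w => (w * deriv (deriv f) w) / (3 * deriv f w + w * deriv (deriv f) w))
      (ball 0 1) := hUan.div hVan hVne
  have hω0 : (fun w => (w * deriv (deriv f) w) / (3 * deriv f w + w * deriv (deriv f) w)) 0
      = 0 := by simp
  have hωb : ∀ w ∈ ball (0:ℂ) 1,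
      ‖(fun w => (w * deriv (deriv f) w) / (3 * deriv f w + w * deriv (deriv f) w)) w‖ < 1 := by
    intro w hw
    have hd := hfd w hw
    have hlt := norm_lt_three_add (hre w hw)
    have h3t : (3 : ℂ) + w * deriv (deriv f) w / deriv f w ≠ 0 := by
      intro h
      have hcon := hre w hw
      rw [show w * deriv (deriv f) w / deriv f w = -3 from eq_neg_of_add_eq_zero_right h] at hcon
      norm_num at hcon
    have key : w * deriv (deriv f) w / (3 * deriv f w + w * deriv (deriv f) w)
        = (w * deriv (deriv f) w / deriv f w) / (3 + w * deriv (deriv f) w / deriv f w) := by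
      rw [eq_div_iff h3t, div_mul_eq_mul_div, div_eq_div_iff (hVne w hw) hd]
      field_simp
    simp only
    rw [key, norm_div, div_lt_one (norm_pos_iff.mpr h3t)]
    exact hlt
  obtain ⟨hα1, hβ1⟩ := schwarz_coeffs hωan hω0 hωb
  set A := deriv (fun w => (w * deriv (deriv f) w) / (3 * deriv f w + w * deriv (deriv f) w)) 0
    with hAdef
  set B := deriv (deriv
      (fun w => (w * deriv (deriv f) w) / (3 * deriv f w + w * deriv (deriv f) w))) 0 with hBdef
  -- derivative computations
  have hfun0 : (fun w : ℂ => (0:ℂ) * f w + w * deriv (deriv f) w)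
      = fun w : ℂ => w * deriv (deriv f) w := by funext w; ring
  have hdU := deriv2_affine hfa hF2 (0:ℂ)
  rw [hfun0] at hdU
  have hdU1 : deriv (fun w : ℂ => w * deriv (deriv f) w) 0 = deriv (deriv f) 0 := by
    rw [hdU.1]; ring
  have hdU2 : deriv (deriv (fun w : ℂ => w * deriv (deriv f) w)) 0
      = 2 * deriv (deriv (deriv f)) 0 := by rw [hdU.2]; ring
  have hdV := deriv2_affine hF1 hF2 (3:ℂ)
  have hdV1 : deriv (fun w : ℂ => 3 * deriv f w + w * deriv (deriv f) w) 0
      = 4 * deriv (deriv f) 0 := by rw [hdV.1]; ring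
  have hdV2 : deriv (deriv (fun w : ℂ => 3 * deriv f w + w * deriv (deriv f) w)) 0
      = 5 * deriv (deriv (deriv f)) 0 := by rw [hdV.2]; ring
  have hV0' : (fun w : ℂ => 3 * deriv f w + w * deriv (deriv f) w) 0 ≠ 0 := by
    simp [hf1]
  have hA : A = deriv (deriv f) 0 / 3 := by
    rw [hAdef, deriv_fun_div (hUan 0 h01).differentiableAt (hVan 0 h01).differentiableAt hV0']
    rw [hdU1, hdV1]
    simp only [hf1]
    norm_num
    ring
  have hB : B = (2/3) * deriv (deriv (deriv f)) 0 - (8/9) * (deriv (deriv f) 0)^2 := by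
    rw [hBdef, deriv2_div (hUan 0 h01) (hVan 0 h01) hV0']
    rw [hdU1, hdV1, hdU2, hdV2]
    simp only [hf1]
    norm_num
    ring
  have hI2 : iteratedDeriv 2 f 0 = deriv (deriv f) 0 := by
    simp [iteratedDeriv_succ, iteratedDeriv_one]
  have hI3 : iteratedDeriv 3 f 0 = deriv (deriv (deriv f)) 0 := by
    simp [iteratedDeriv_succ, iteratedDeriv_one]
  have hi2 : deriv (deriv f) 0 = 3 * A := by rw [hA]; ring
  have hi3 : deriv (deriv (deriv f)) 0 = 3 * (B/2) + 12 * A^2 := by rw [hB, hA]; ring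
  have hexpr : 1 + 2 * (iteratedDeriv 2 f 0 / 2) * z + 3 * (iteratedDeriv 3 f 0 / 6) * z ^ 2
      = 1 + 3*A*z + 6*A^2*z^2 + (3/2)*(B/2)*z^2 := by
    rw [hI2, hI3, hi2, hi3]; ring
  rw [hexpr]
  exact key_ineq A (B/2) z hα1 hβ1 hz
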